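/- arXiv:2502.17515 — 3 statements merged into one kernel-verified Lean document; each statement's English description precedes it below -/
import Mathlib

section
/- For all real numbers a and b, setting p_a = 1/(1 + e^a) and p_b = 1/(1 + e^b), one has kl(p_a‖p_b) + kl(p_b‖p_a) ≤ (a − b)². -/
/-- Kullback–Leibler divergence between Bernoulli(p) and Bernoulli(q). -/
noncomputable def klBer (p q : ℝ) : ℝ :=
  p * Real.log (p / q) + (1 - p) * Real.log ((1 - p) / (1 - q))

lemma aux_lip {a b : ℝ} (hab : a ≤ b) :
    1 / (1 + Real.exp a) - 1 / (1 + Real.exp b) ≤ b - a := by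
  have ha : (0:ℝ) < Real.exp a := Real.exp_pos a
  have hb : (0:ℝ) < Real.exp b := Real.exp_pos b
  have h1 : a - b + 1 ≤ Real.exp (a - b) := Real.add_one_le_exp _
  have h2 : Real.exp (a - b) * Real.exp b = Real.exp a := by
    rw [← Real.exp_add]; ring_nf
  have h3 : Real.exp b - Real.exp a ≤ (b - a) * Real.exp b := by nlinarith
  have hpa : (0:ℝ) < 1 + Real.exp a := by linarith
  have hpb : (0:ℝ) < 1 + Real.exp b := by linarith
  rw [div_sub_div _ _ (ne_of_gt hpa) (ne_of_gt hpb), div_le_iff₀ (by positivity)]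
  nlinarith [mul_pos ha hb]

lemma aux_mono {a b : ℝ} (hab : a ≤ b) :
    1 / (1 + Real.exp b) ≤ 1 / (1 + Real.exp a) := by
  have : Real.exp a ≤ Real.exp b := Real.exp_le_exp.mpr hab
  have hpa : (0:ℝ) < 1 + Real.exp a := by positivity
  apply one_div_le_one_div_of_le hpa; linarith

theorem kl_sum_le_sq (a b : ℝ) :
    klBer (1 / (1 + Real.exp a)) (1 / (1 + Real.exp b)) +
      klBer (1 / (1 + Real.exp b)) (1 / (1 + Real.exp a)) ≤ (a - b) ^ 2 := by
  have ha : (0:ℝ) < Real.exp a := Real.exp_pos a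
  have hb : (0:ℝ) < Real.exp b := Real.exp_pos b
  have hpa : (0:ℝ) < 1 + Real.exp a := by linarith
  have hpb : (0:ℝ) < 1 + Real.exp b := by linarith
  have e1 : (1 / (1 + Real.exp a)) / (1 / (1 + Real.exp b))
      = (1 + Real.exp b) / (1 + Real.exp a) := by
    field_simp
  have sa : 1 - 1 / (1 + Real.exp a) = Real.exp a / (1 + Real.exp a) := by field_simp; ring
  have sb : 1 - 1 / (1 + Real.exp b) = Real.exp b / (1 + Real.exp b) := by field_simp; ring
  have e2 : (1 - 1 / (1 + Real.exp a)) / (1 - 1 / (1 + Real.exp b))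
      = (Real.exp a * (1 + Real.exp b)) / (Real.exp b * (1 + Real.exp a)) := by
    rw [sa, sb]; field_simp
  have e1' : (1 / (1 + Real.exp b)) / (1 / (1 + Real.exp a))
      = (1 + Real.exp a) / (1 + Real.exp b) := by
    field_simp
  have e2' : (1 - 1 / (1 + Real.exp b)) / (1 - 1 / (1 + Real.exp a))
      = (Real.exp b * (1 + Real.exp a)) / (Real.exp a * (1 + Real.exp b)) := by
    rw [sa, sb]; field_simp
  have l1 : Real.log ((1 + Real.exp b) / (1 + Real.exp a))
      = Real.log (1 + Real.exp b) - Real.log (1 + Real.exp a) :=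
    Real.log_div (by positivity) (by positivity)
  have l1' : Real.log ((1 + Real.exp a) / (1 + Real.exp b))
      = Real.log (1 + Real.exp a) - Real.log (1 + Real.exp b) :=
    Real.log_div (by positivity) (by positivity)
  have l2 : Real.log ((Real.exp a * (1 + Real.exp b)) / (Real.exp b * (1 + Real.exp a)))
      = a + Real.log (1 + Real.exp b) - (b + Real.log (1 + Real.exp a)) := by
    rw [Real.log_div (by positivity) (by positivity), Real.log_mul (by positivity) (by positivity),
      Real.log_mul (by positivity) (by positivity), Real.log_exp, Real.log_exp]
  have l2' : Real.log ((Real.exp b * (1 + Real.exp a)) / (Real.exp a * (1 + Real.exp b)))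
      = b + Real.log (1 + Real.exp a) - (a + Real.log (1 + Real.exp b)) := by
    rw [Real.log_div (by positivity) (by positivity), Real.log_mul (by positivity) (by positivity),
      Real.log_mul (by positivity) (by positivity), Real.log_exp, Real.log_exp]
  have key : klBer (1 / (1 + Real.exp a)) (1 / (1 + Real.exp b)) +
      klBer (1 / (1 + Real.exp b)) (1 / (1 + Real.exp a))
      = (1 / (1 + Real.exp a) - 1 / (1 + Real.exp b)) * (b - a) := by
    unfold klBer
    rw [e1, e2, e1', e2', l1, l1', l2, l2']
    ring
  rw [key]
  rcases le_total a b with hab | hab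
  · have h1 := aux_lip hab
    have h2 := aux_mono hab
    nlinarith
  · have h1 := aux_lip hab
    have h2 := aux_mono hab
    nlinarith
end

section
/- Let L ≥ 0, B ≥ 0, κ > 0, and let x_1, …, x_N ∈ ℝ^d satisfy ‖x_i‖ ≤ 2L for all i and (1/N)·∑_{i=1}^N ⟨x_i, v⟩² ≥ κ‖v‖² for every v ∈ ℝ^d. Let y_1, …, y_N ∈ [0,1] and set γ = 1/(2 + e^{2LB} + e^{−2LB}). Then the empirical Bradley–Terry–Luce loss f(θ) = −(1/N)·∑_{i=1}^N ( y_i·log σ(⟨x_i, θ⟩) + (1 − y_i)·log(1 − σ(⟨x_i, θ⟩)) ) is strongly convex with modulus κγ on the closed ball {θ ∈ ℝ^d : ‖θ‖ ≤ B}. -/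
/-- The logistic sigmoid function. -/
noncomputable def sigmoid (z : ℝ) : ℝ := 1 / (1 + Real.exp (-z))

lemma log_sigmoid (z : ℝ) : Real.log (sigmoid z) = z - Real.log (1 + Real.exp z) := by
  have h : sigmoid z = Real.exp z / (1 + Real.exp z) := by
    unfold sigmoid
    rw [Real.exp_neg]
    have h1 : (0:ℝ) < Real.exp z := Real.exp_pos z
    field_simp
    ring
  rw [h, Real.log_div (ne_of_gt (Real.exp_pos z)) (by positivity), Real.log_exp]

lemma log_one_sub_sigmoid (z : ℝ) :
    Real.log (1 - sigmoid z) = - Real.log (1 + Real.exp z) := by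
  have h : 1 - sigmoid z = 1 / (1 + Real.exp z) := by
    unfold sigmoid
    rw [Real.exp_neg]
    have h1 : (0:ℝ) < Real.exp z := Real.exp_pos z
    field_simp
    ring
  rw [h, Real.log_div one_ne_zero (by positivity), Real.log_one, zero_sub]

lemma convex_aux (M : ℝ) (hM : 0 ≤ M) (c : ℝ)
    (hc : c = 1 / (2 + Real.exp M + Real.exp (-M))) :
    ConvexOn ℝ (Set.Icc (-M) M)
      (fun z => Real.log (1 + Real.exp z) - c / 2 * z ^ 2) := by
  have hd1 : ∀ z : ℝ, HasDerivAt (fun z => Real.log (1 + Real.exp z) - c / 2 * z ^ 2)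
      (Real.exp z / (1 + Real.exp z) - c * z) z := by
    intro z
    have h1 : HasDerivAt (fun z : ℝ => 1 + Real.exp z) (Real.exp z) z :=
      (Real.hasDerivAt_exp z).const_add 1
    have h2 : HasDerivAt (fun z : ℝ => Real.log (1 + Real.exp z))
        (Real.exp z / (1 + Real.exp z)) z := h1.log (by positivity)
    have h3 : HasDerivAt (fun z : ℝ => c / 2 * z ^ 2) (c * z) z := by
      have := (hasDerivAt_pow 2 z).const_mul (c / 2)
      refine this.congr_deriv ?_
      norm_num
      ring
    exact h2.sub h3
  have hderiv : deriv (fun z => Real.log (1 + Real.exp z) - c / 2 * z ^ 2)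
      = fun z => Real.exp z / (1 + Real.exp z) - c * z := by
    funext z; exact (hd1 z).deriv
  have hd2 : ∀ z : ℝ, HasDerivAt (fun z => Real.exp z / (1 + Real.exp z) - c * z)
      (Real.exp z / (1 + Real.exp z) ^ 2 - c) z := by
    intro z
    have h1 : HasDerivAt (fun z : ℝ => 1 + Real.exp z) (Real.exp z) z :=
      (Real.hasDerivAt_exp z).const_add 1
    have h2 : HasDerivAt (fun z : ℝ => Real.exp z / (1 + Real.exp z))
        ((Real.exp z * (1 + Real.exp z) - Real.exp z * Real.exp z) / (1 + Real.exp z) ^ 2) z :=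
      (Real.hasDerivAt_exp z).div h1 (by positivity)
    have h3 : HasDerivAt (fun z : ℝ => c * z) c z := by
      simpa using (hasDerivAt_id z).const_mul c
    have := h2.sub h3
    refine this.congr_deriv ?_
    have hp : (0:ℝ) < (1 + Real.exp z) ^ 2 := by positivity
    ring
  apply convexOn_of_deriv2_nonneg' (convex_Icc _ _)
  · intro z _
    exact (hd1 z).differentiableAt.differentiableWithinAt
  · intro z _
    rw [hderiv]
    exact (hd2 z).differentiableAt.differentiableWithinAt
  · intro z hz
    have hz1 : -M ≤ z := hz.1
    have hz2 : z ≤ M := hz.2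
    have : deriv^[2] (fun z => Real.log (1 + Real.exp z) - c / 2 * z ^ 2) z
        = Real.exp z / (1 + Real.exp z) ^ 2 - c := by
      show deriv (deriv _) z = _
      rw [hderiv]
      exact (hd2 z).deriv
    rw [this]
    have key : Real.exp z / (1 + Real.exp z) ^ 2 = 1 / (2 + Real.exp z + Real.exp (-z)) := by
      rw [Real.exp_neg]
      have h1 : (0:ℝ) < Real.exp z := Real.exp_pos z
      field_simp
      ring
    rw [key, hc, sub_nonneg]
    apply one_div_le_one_div_of_le (by positivity)
    have e1 : Real.exp M * Real.exp (-M) = 1 := by rw [← Real.exp_add]; simp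
    have e2 : Real.exp z * Real.exp (-z) = 1 := by rw [← Real.exp_add]; simp
    have p1 : 0 ≤ (Real.exp M - Real.exp z) * (1 - Real.exp (-M) * Real.exp (-z)) := by
      apply mul_nonneg
      · exact sub_nonneg.mpr (Real.exp_le_exp.mpr hz2)
      · rw [sub_nonneg, ← Real.exp_add]
        apply Real.exp_le_one_iff.mpr
        linarith
    have q1 : Real.exp M * Real.exp (-M) * Real.exp (-z) = Real.exp (-z) := by rw [e1, one_mul]
    have q2 : Real.exp z * (Real.exp (-M) * Real.exp (-z)) = Real.exp (-M) := by
      rw [show Real.exp z * (Real.exp (-M) * Real.exp (-z)) = Real.exp z * Real.exp (-z) * Real.exp (-M) by ring, e2, one_mul]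
    nlinarith [p1, q1, q2]

lemma key1d (M : ℝ) (hM : 0 ≤ M) (c : ℝ)
    (hc : c = 1 / (2 + Real.exp M + Real.exp (-M)))
    (u v t : ℝ) (hu : |u| ≤ M) (hv : |v| ≤ M) (ht0 : 0 ≤ t) (ht1 : t ≤ 1) :
    Real.log (1 + Real.exp (t * u + (1 - t) * v)) ≤
      t * Real.log (1 + Real.exp u) + (1 - t) * Real.log (1 + Real.exp v)
        - c / 2 * (t * (1 - t) * (u - v) ^ 2) := by
  have hconv := convex_aux M hM c hc
  have hmemu : u ∈ Set.Icc (-M) M := abs_le.mp hu |> fun h => ⟨h.1, h.2⟩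
  have hmemv : v ∈ Set.Icc (-M) M := abs_le.mp hv |> fun h => ⟨h.1, h.2⟩
  have h := hconv.2 hmemu hmemv ht0 (show (0:ℝ) ≤ 1 - t by linarith) (show t + (1 - t) = 1 by ring)
  simp only [smul_eq_mul] at h
  nlinarith [h]

theorem btl_empirical_loss_strongly_convex (d N : ℕ) (hN : 1 ≤ N)
    (L B κ : ℝ) (hL : 0 ≤ L) (hB : 0 ≤ B) (hκ : 0 < κ)
    (x : Fin N → EuclideanSpace ℝ (Fin d)) (hx : ∀ i, ‖x i‖ ≤ 2 * L)
    (hcov : ∀ v : EuclideanSpace ℝ (Fin d),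
      κ * ‖v‖ ^ 2 ≤ (1 / N) * ∑ i, (inner ℝ (x i) v : ℝ) ^ 2)
    (y : Fin N → ℝ) (hy : ∀ i, y i ∈ Set.Icc (0 : ℝ) 1)
    (γ : ℝ) (hγ : γ = 1 / (2 + Real.exp (2 * L * B) + Real.exp (-(2 * L * B))))
    (f : EuclideanSpace ℝ (Fin d) → ℝ)
    (hf : f = fun θ => -(1 / N) * ∑ i,
      (y i * Real.log (sigmoid (inner ℝ (x i) θ : ℝ)) +
        (1 - y i) * Real.log (1 - sigmoid (inner ℝ (x i) θ : ℝ)))) :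
    ∀ a b : EuclideanSpace ℝ (Fin d), ‖a‖ ≤ B → ‖b‖ ≤ B → ∀ t ∈ Set.Icc (0 : ℝ) 1,
      f (t • a + (1 - t) • b) ≤
        t * f a + (1 - t) * f b - κ * γ / 2 * t * (1 - t) * ‖a - b‖ ^ 2 := by
  intro a b ha hb t ht
  obtain ⟨ht0, ht1⟩ := ht
  have hN0 : (0:ℝ) < N := by exact_mod_cast Nat.lt_of_lt_of_le Nat.zero_lt_one hN
  have hNinv : (0:ℝ) ≤ 1 / N := by positivity
  set M : ℝ := 2 * L * B with hMdef
  have hM0 : 0 ≤ M := by positivity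
  have hγ0 : 0 ≤ γ := by rw [hγ]; positivity
  -- rewrite f in logistic form
  have fform : ∀ θ : EuclideanSpace ℝ (Fin d), f θ =
      (1 / (N:ℝ)) * ∑ i, (Real.log (1 + Real.exp (inner ℝ (x i) θ : ℝ))
        - y i * (inner ℝ (x i) θ : ℝ)) := by
    intro θ
    rw [hf]
    have : ∀ i : Fin N, Real.log (1 + Real.exp (inner ℝ (x i) θ : ℝ))
        - y i * (inner ℝ (x i) θ : ℝ)
        = -(y i * Real.log (sigmoid (inner ℝ (x i) θ : ℝ)) +
          (1 - y i) * Real.log (1 - sigmoid (inner ℝ (x i) θ : ℝ))) := by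
      intro i
      rw [log_sigmoid, log_one_sub_sigmoid]
      ring
    simp only [this]
    rw [Finset.sum_neg_distrib]
    ring
  set u : Fin N → ℝ := fun i => (inner ℝ (x i) a : ℝ) with hu
  set v : Fin N → ℝ := fun i => (inner ℝ (x i) b : ℝ) with hv
  have hub : ∀ i, |u i| ≤ M := by
    intro i
    calc |u i| ≤ ‖x i‖ * ‖a‖ := abs_real_inner_le_norm _ _
      _ ≤ (2 * L) * B := mul_le_mul (hx i) ha (norm_nonneg _) (by positivity)
  have hvb : ∀ i, |v i| ≤ M := by
    intro i
    calc |v i| ≤ ‖x i‖ * ‖b‖ := abs_real_inner_le_norm _ _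
      _ ≤ (2 * L) * B := mul_le_mul (hx i) hb (norm_nonneg _) (by positivity)
  have hγM : γ = 1 / (2 + Real.exp M + Real.exp (-M)) := hγ
  have hcombi : ∀ i, (inner ℝ (x i) (t • a + (1 - t) • b) : ℝ) = t * u i + (1 - t) * v i := by
    intro i
    simp only [inner_add_right, real_inner_smul_right]
    rfl
  have step1 : ∑ i, (Real.log (1 + Real.exp (inner ℝ (x i) (t • a + (1 - t) • b) : ℝ))
        - y i * (inner ℝ (x i) (t • a + (1 - t) • b) : ℝ))
      ≤ ∑ i, (t * (Real.log (1 + Real.exp (u i)) - y i * u i)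
        + (1 - t) * (Real.log (1 + Real.exp (v i)) - y i * v i)
        - (γ / 2 * (t * (1 - t))) * (u i - v i) ^ 2) := by
    apply Finset.sum_le_sum
    intro i _
    rw [hcombi i]
    have hk := key1d M hM0 γ hγM (u i) (v i) t (hub i) (hvb i) ht0 ht1
    nlinarith [hk]
  have expand : (1 / (N:ℝ)) * ∑ i, (t * (Real.log (1 + Real.exp (u i)) - y i * u i)
        + (1 - t) * (Real.log (1 + Real.exp (v i)) - y i * v i)
        - (γ / 2 * (t * (1 - t))) * (u i - v i) ^ 2)
      = t * ((1 / (N:ℝ)) * ∑ i, (Real.log (1 + Real.exp (u i)) - y i * u i))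
        + (1 - t) * ((1 / (N:ℝ)) * ∑ i, (Real.log (1 + Real.exp (v i)) - y i * v i))
        - (γ / 2 * (t * (1 - t))) * ((1 / (N:ℝ)) * ∑ i, (u i - v i) ^ 2) := by
    rw [Finset.sum_sub_distrib, Finset.sum_add_distrib, ← Finset.mul_sum, ← Finset.mul_sum,
      ← Finset.mul_sum]
    ring
  have hq : κ * ‖a - b‖ ^ 2 ≤ (1 / (N:ℝ)) * ∑ i, (u i - v i) ^ 2 := by
    have h := hcov (a - b)
    have : ∀ i : Fin N, (inner ℝ (x i) (a - b) : ℝ) = u i - v i := by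
      intro i; simp [hu, hv, inner_sub_right]
    simpa [this] using h
  have hcoeff : 0 ≤ γ / 2 * (t * (1 - t)) := by
    apply mul_nonneg (by positivity) (mul_nonneg ht0 (by linarith))
  have hq2 : (γ / 2 * (t * (1 - t))) * (κ * ‖a - b‖ ^ 2)
      ≤ (γ / 2 * (t * (1 - t))) * ((1 / (N:ℝ)) * ∑ i, (u i - v i) ^ 2) :=
    mul_le_mul_of_nonneg_left hq hcoeff
  have main := mul_le_mul_of_nonneg_left step1 hNinv
  rw [fform (t • a + (1 - t) • b), fform a, fform b]
  nlinarith [main, expand, hq2]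
end

section
/- Let Σ be a symmetric positive definite d×d real matrix, Θ ⊆ ℝ^d a convex set, μ > 0, and f : ℝ^d → ℝ a differentiable function satisfying f(θ₂) ≥ f(θ₁) + ⟨∇f(θ₁), θ₂ − θ₁⟩ + μ·(θ₂ − θ₁)ᵀ Σ (θ₂ − θ₁) for all θ₁, θ₂ ∈ Θ. If θ̂ ∈ Θ satisfies f(θ̂) ≤ f(θ) for all θ ∈ Θ and θ* ∈ Θ, then μ·√((θ̂ − θ*)ᵀ Σ (θ̂ − θ*)) ≤ √( ∇f(θ*)ᵀ Σ^{−1} ∇f(θ*) ). -/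
open Matrix

theorem seminorm_bound_of_minimizer (d : ℕ) (Sig : Matrix (Fin d) (Fin d) ℝ)
    (hsymm : Sig.IsSymm) (hpd : Sig.PosDef)
    (Θ : Set (EuclideanSpace ℝ (Fin d))) (hΘ : Convex ℝ Θ) (μ : ℝ) (hμ : 0 < μ)
    (f : EuclideanSpace ℝ (Fin d) → ℝ) (hdiff : Differentiable ℝ f)
    (hsc : ∀ θ₁ ∈ Θ, ∀ θ₂ ∈ Θ,
      f θ₁ + (inner ℝ (gradient f θ₁) (θ₂ - θ₁) : ℝ) +
        μ * ((θ₂ - θ₁) ⬝ᵥ Sig.mulVec (θ₂ - θ₁)) ≤ f θ₂)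
    (θhat θs : EuclideanSpace ℝ (Fin d)) (hθhat : θhat ∈ Θ) (hθs : θs ∈ Θ)
    (hmin : ∀ θ ∈ Θ, f θhat ≤ f θ) :
    μ * Real.sqrt ((θhat - θs) ⬝ᵥ Sig.mulVec (θhat - θs)) ≤
      Real.sqrt ((gradient f θs : EuclideanSpace ℝ (Fin d)) ⬝ᵥ
        Sig⁻¹.mulVec (gradient f θs : EuclideanSpace ℝ (Fin d))) := by
  classical
  set v : Fin d → ℝ := WithLp.ofLp (θhat - θs : EuclideanSpace ℝ (Fin d)) with hv
  set g : Fin d → ℝ := WithLp.ofLp (gradient f θs : EuclideanSpace ℝ (Fin d)) with hg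
  set w : Fin d → ℝ := Sig⁻¹.mulVec g with hw
  have hdet : IsUnit Sig.det := isUnit_iff_ne_zero.2 (ne_of_gt hpd.det_pos)
  have hSw : Sig.mulVec w = g := by
    rw [hw, Matrix.mulVec_mulVec, Matrix.mul_nonsing_inv _ hdet, Matrix.one_mulVec]
  have h1 := hsc θs hθs θhat hθhat
  have h2 := hmin θs hθs
  have hinner : (inner ℝ (gradient f θs) (θhat - θs) : ℝ) = g ⬝ᵥ v := by
    rw [EuclideanSpace.inner_eq_star_dotProduct, ← hv, ← hg, star_trivial, dotProduct_comm]
  rw [hinner, show WithLp.ofLp θhat - WithLp.ofLp θs = v from rfl, ← hv] at h1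
  set c : ℝ := v ⬝ᵥ Sig.mulVec v with hc
  set a : ℝ := g ⬝ᵥ w with ha
  have key : μ * c ≤ - (g ⬝ᵥ v) := by linarith
  have hcnn : 0 ≤ c := by simpa [hc] using hpd.posSemidef.dotProduct_mulVec_nonneg v
  have hann : 0 ≤ a := by
    have := hpd.posSemidef.inv.dotProduct_mulVec_nonneg g
    simpa [ha, hw] using this
  have hCS : (g ⬝ᵥ v) ^ 2 ≤ a * c := by
    have hq : ∀ t : ℝ, 0 ≤ a * (t * t) + (2 * (g ⬝ᵥ v)) * t + c := by
      intro t
      have h0 : (0:ℝ) ≤ (v + t • w) ⬝ᵥ Sig.mulVec (v + t • w) := by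
        simpa using hpd.posSemidef.dotProduct_mulVec_nonneg (v + t • w)
      have hwv : w ⬝ᵥ Sig.mulVec v = g ⬝ᵥ v := by
        rw [Matrix.dotProduct_mulVec, ← Matrix.mulVec_transpose, hsymm.eq, hSw]
      have hvw : v ⬝ᵥ Sig.mulVec w = g ⬝ᵥ v := by
        rw [hSw, dotProduct_comm]
      have hww : w ⬝ᵥ Sig.mulVec w = a := by rw [hSw, dotProduct_comm, ha]
      have hexp : (v + t • w) ⬝ᵥ Sig.mulVec (v + t • w)
          = a * (t * t) + (2 * (g ⬝ᵥ v)) * t + c := by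
        simp only [Matrix.mulVec_add, Matrix.mulVec_smul, add_dotProduct,
          dotProduct_add, smul_dotProduct, dotProduct_smul, smul_eq_mul,
          hwv, hvw, hww, ← hc]
        ring
      rw [hexp] at h0
      exact h0
    have hd := discrim_le_zero hq
    rw [discrim] at hd
    nlinarith [hd]
  have hgv : - (g ⬝ᵥ v) ≤ Real.sqrt a * Real.sqrt c := by
    have h3 : (-(g ⬝ᵥ v)) ^ 2 ≤ a * c := by nlinarith [hCS]
    calc -(g ⬝ᵥ v) ≤ |(-(g ⬝ᵥ v))| := le_abs_self _
      _ = Real.sqrt ((-(g ⬝ᵥ v)) ^ 2) := (Real.sqrt_sq_eq_abs _).symm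
      _ ≤ Real.sqrt (a * c) := Real.sqrt_le_sqrt h3
      _ = Real.sqrt a * Real.sqrt c := Real.sqrt_mul hann c
  have hμc : μ * c ≤ Real.sqrt a * Real.sqrt c := le_trans key hgv
  show μ * Real.sqrt c ≤ Real.sqrt a
  rcases eq_or_lt_of_le hcnn with hc0 | hc0
  · rw [← hc0]; simp [Real.sqrt_nonneg]
  · have hsc0 : 0 < Real.sqrt c := Real.sqrt_pos.2 hc0
    have heq : μ * c = μ * Real.sqrt c * Real.sqrt c := by
      rw [mul_assoc, Real.mul_self_sqrt hcnn]
    rw [heq] at hμc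
    exact le_of_mul_le_mul_right hμc hsc0
end
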